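/- (Doubling construction.) Let n and g be positive integers with n·g even and n > g. If there exists an OF(n,g), then there exists an OF(2n,g). -/

import Mathlib

/-- The weight of a word of length `m` over `ℤ_q` (represented as `Fin q`):
the number of nonzero coordinates. -/
def wordWeight {m q : ℕ} (x : Fin m → Fin q) : ℕ :=
  (Finset.univ.filter (fun i => (x i : ℕ) ≠ 0)).card

/-- The set `H(m)` of all words of length `m` and weight `2` over `ℤ_{g+1}`. -/
def weightTwoWords (m g : ℕ) : Finset (Fin m → Fin (g + 1)) :=
  Finset.univ.filter (fun x => wordWeight x = 2)

/-- A partition of `H(m)` (words of length `m`, weight `2` over `ℤ_{g+1}`) into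
`k` subsets, each of cardinality `s`, with pairwise Hamming distance at least
`3` inside each subset. -/
def HasDist3Partition (m g k s : ℕ) : Prop :=
  ∃ P : Fin k → Finset (Fin m → Fin (g + 1)),
    (∀ i j, i ≠ j → Disjoint (P i) (P j)) ∧
    (Finset.univ.biUnion P = weightTwoWords m g) ∧
    (∀ i, (P i).card = s) ∧
    (∀ i, ∀ x ∈ P i, ∀ y ∈ P i, x ≠ y → 3 ≤ hammingDist x y)

/-- An `ODAR(m,g)`: a partition of `H(m)` into `g²` subsets, each of
cardinality `C(m,2)` and with pairwise Hamming distance at least 3. -/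
def IsODAR (m g : ℕ) : Prop :=
  HasDist3Partition m g (g ^ 2) (m.choose 2)

/-- An `OF(m,g)`: a partition of `H(m)` into `g(m-1)` subsets, each of
cardinality `g·m/2` and with pairwise Hamming distance at least 3. -/
def IsOF (m g : ℕ) : Prop :=
  HasDist3Partition m g (g * (m - 1)) (g * m / 2)


section AuxOFDoubling

open Finset

variable {n g : ℕ}

/-- Extend a word of length `n` to length `2n` by zeros on the right. -/
def extL (n g : ℕ) (x : Fin n → Fin (g+1)) : Fin (2*n) → Fin (g+1) :=
  fun i => if h : (i:ℕ) < n then x ⟨i, h⟩ else 0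

/-- Extend a word of length `n` to length `2n` by zeros on the left. -/
def extR (n g : ℕ) (x : Fin n → Fin (g+1)) : Fin (2*n) → Fin (g+1) :=
  fun i => if h : (i:ℕ) < n then 0 else x ⟨(i:ℕ) - n, by have := i.isLt; omega⟩

def lowEmb (n : ℕ) (j : Fin n) : Fin (2*n) := ⟨j, by have := j.isLt; omega⟩
def highEmb (n : ℕ) (j : Fin n) : Fin (2*n) := ⟨n + j, by have := j.isLt; omega⟩

lemma lowEmb_inj : Function.Injective (lowEmb n) := by
  intro a b h; simpa [lowEmb, Fin.ext_iff] using h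

lemma highEmb_inj : Function.Injective (highEmb n) := by
  intro a b h; simp [highEmb, Fin.ext_iff] at h; exact Fin.ext h

lemma extL_apply_low (x : Fin n → Fin (g+1)) (j : Fin n) :
    extL n g x (lowEmb n j) = x j := by
  simp [extL, lowEmb]

lemma extR_apply_high (x : Fin n → Fin (g+1)) (j : Fin n) :
    extR n g x (highEmb n j) = x j := by
  simp [extR, highEmb]

lemma extL_apply_of_ge (x : Fin n → Fin (g+1)) (i : Fin (2*n)) (h : n ≤ (i:ℕ)) :
    extL n g x i = 0 := by
  simp [extL, Nat.not_lt.mpr h]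

lemma extR_apply_of_lt (x : Fin n → Fin (g+1)) (i : Fin (2*n)) (h : (i:ℕ) < n) :
    extR n g x i = 0 := by
  simp [extR, h]

lemma filter_extL_ne (x y : Fin n → Fin (g+1)) :
    ({i | extL n g x i ≠ extL n g y i} : Finset (Fin (2*n)))
      = ({i | x i ≠ y i} : Finset (Fin n)).image (lowEmb n) := by
  ext i
  simp only [mem_filter, mem_univ, true_and, mem_image]
  constructor
  · intro hi
    by_cases h : (i:ℕ) < n
    · refine ⟨⟨i, h⟩, ?_, ?_⟩
      · simpa [extL, h] using hi
      · simp [lowEmb]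
    · simp [extL, h] at hi
  · rintro ⟨j, hj, rfl⟩
    simpa [extL_apply_low] using hj

lemma filter_extR_ne (x y : Fin n → Fin (g+1)) :
    ({i | extR n g x i ≠ extR n g y i} : Finset (Fin (2*n)))
      = ({i | x i ≠ y i} : Finset (Fin n)).image (highEmb n) := by
  ext i
  simp only [mem_filter, mem_univ, true_and, mem_image]
  constructor
  · intro hi
    by_cases h : (i:ℕ) < n
    · simp [extR, h] at hi
    · refine ⟨⟨(i:ℕ) - n, by have := i.isLt; omega⟩, ?_, ?_⟩
      · simpa [extR, h] using hi
      · simp [highEmb, Fin.ext_iff]; omega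
  · rintro ⟨j, hj, rfl⟩
    simpa [extR_apply_high] using hj

lemma hammingDist_extL (x y : Fin n → Fin (g+1)) :
    hammingDist (extL n g x) (extL n g y) = hammingDist x y := by
  unfold hammingDist
  rw [filter_extL_ne, card_image_of_injective _ lowEmb_inj]

lemma hammingDist_extR (x y : Fin n → Fin (g+1)) :
    hammingDist (extR n g x) (extR n g y) = hammingDist x y := by
  unfold hammingDist
  rw [filter_extR_ne, card_image_of_injective _ highEmb_inj]

lemma val_ne_zero_iff {a : Fin (g+1)} : (a:ℕ) ≠ 0 ↔ a ≠ 0 := by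
  exact ⟨fun h h' => h (by rw [h']; rfl), fun h h' => h (Fin.ext h')⟩

lemma filter_extL_supp (x : Fin n → Fin (g+1)) :
    ({i | (extL n g x i : ℕ) ≠ 0} : Finset (Fin (2*n)))
      = ({i | (x i : ℕ) ≠ 0} : Finset (Fin n)).image (lowEmb n) := by
  have : ∀ i : Fin (2*n), ((extL n g x i : ℕ) ≠ 0) ↔ (extL n g x i ≠ extL n g 0 i) := by
    intro i
    have h0 : extL n g (0 : Fin n → Fin (g+1)) i = 0 := by
      by_cases h : (i:ℕ) < n <;> simp [extL, h]
    rw [h0, val_ne_zero_iff]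
  rw [filter_congr (fun i _ => by rw [this i]), filter_extL_ne]
  congr 1
  apply filter_congr
  intro j _
  simp [val_ne_zero_iff]

lemma filter_extR_supp (x : Fin n → Fin (g+1)) :
    ({i | (extR n g x i : ℕ) ≠ 0} : Finset (Fin (2*n)))
      = ({i | (x i : ℕ) ≠ 0} : Finset (Fin n)).image (highEmb n) := by
  have : ∀ i : Fin (2*n), ((extR n g x i : ℕ) ≠ 0) ↔ (extR n g x i ≠ extR n g 0 i) := by
    intro i
    have h0 : extR n g (0 : Fin n → Fin (g+1)) i = 0 := by
      by_cases h : (i:ℕ) < n <;> simp [extR, h]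
    rw [h0, val_ne_zero_iff]
  rw [filter_congr (fun i _ => by rw [this i]), filter_extR_ne]
  congr 1
  apply filter_congr
  intro j _
  simp [val_ne_zero_iff]

lemma wordWeight_extL (x : Fin n → Fin (g+1)) :
    wordWeight (extL n g x) = wordWeight x := by
  unfold wordWeight
  rw [show (Finset.univ.filter (fun i => ((extL n g x i : ℕ) ≠ 0))) = _ from filter_extL_supp x,
    card_image_of_injective _ lowEmb_inj]

lemma wordWeight_extR (x : Fin n → Fin (g+1)) :
    wordWeight (extR n g x) = wordWeight x := by
  unfold wordWeight
  rw [show (Finset.univ.filter (fun i => ((extR n g x i : ℕ) ≠ 0))) = _ from filter_extR_supp x,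
    card_image_of_injective _ highEmb_inj]

/-- Cross word: nonzero value `v+1` at position `a` (first half) and `u+1`
at position `n+b` (second half). -/
def crossW (n g : ℕ) (a b : Fin n) (v u : Fin g) : Fin (2*n) → Fin (g+1) :=
  fun i => if (i:ℕ) = (a:ℕ) then v.succ else if (i:ℕ) = n + (b:ℕ) then u.succ else 0

lemma crossW_apply_low (a b : Fin n) (v u : Fin g) :
    crossW n g a b v u (lowEmb n a) = v.succ := by simp [crossW, lowEmb]

lemma crossW_apply_high (a b : Fin n) (v u : Fin g) :
    crossW n g a b v u (highEmb n b) = u.succ := by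
  have : ¬ ((n + (b:ℕ)) = (a:ℕ)) := by have := a.isLt; omega
  simp [crossW, highEmb, this]

lemma crossW_apply_other (a b : Fin n) (v u : Fin g) (i : Fin (2*n))
    (h1 : (i:ℕ) ≠ (a:ℕ)) (h2 : (i:ℕ) ≠ n + (b:ℕ)) :
    crossW n g a b v u i = 0 := by simp [crossW, h1, h2]

lemma filter_crossW_supp (a b : Fin n) (v u : Fin g) :
    ({i | (crossW n g a b v u i : ℕ) ≠ 0} : Finset (Fin (2*n)))
      = {lowEmb n a, highEmb n b} := by
  ext i
  simp only [mem_filter, mem_univ, true_and, mem_insert, mem_singleton]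
  constructor
  · intro hi
    by_cases h1 : (i:ℕ) = (a:ℕ)
    · exact Or.inl (Fin.ext h1)
    · by_cases h2 : (i:ℕ) = n + (b:ℕ)
      · exact Or.inr (Fin.ext h2)
      · simp [crossW, h1, h2] at hi
  · rintro (rfl | rfl)
    · rw [crossW_apply_low]; simpa using (Fin.succ_ne_zero v)
    · rw [crossW_apply_high]; simpa using (Fin.succ_ne_zero u)

lemma wordWeight_crossW (a b : Fin n) (v u : Fin g) :
    wordWeight (crossW n g a b v u) = 2 := by
  unfold wordWeight
  rw [show (Finset.univ.filter (fun i => ((crossW n g a b v u i : ℕ) ≠ 0))) = _ from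
    filter_crossW_supp a b v u]
  rw [card_insert_of_notMem, card_singleton]
  simp only [mem_singleton, lowEmb, highEmb, Fin.ext_iff]
  have := a.isLt; omega

lemma crossW_inj (a a' b b' : Fin n) (v v' u u' : Fin g)
    (h : crossW n g a b v u = crossW n g a' b' v' u') :
    a = a' ∧ b = b' ∧ v = v' ∧ u = u' := by
  have ha : a = a' := by
    by_contra hne
    have h1 := congrFun h (lowEmb n a)
    rw [crossW_apply_low] at h1
    rw [crossW_apply_other a' b' v' u' (lowEmb n a)
      (by simpa [lowEmb, Fin.ext_iff] using hne)
      (by simp only [lowEmb]; have := a.isLt; have := b'.isLt; omega)] at h1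
    exact (Fin.succ_ne_zero v) h1
  subst ha
  have hv : v = v' := by
    have h1 := congrFun h (lowEmb n a)
    rw [crossW_apply_low, crossW_apply_low] at h1
    exact Fin.succ_injective _ h1
  have hb : b = b' := by
    by_contra hne
    have h1 := congrFun h (highEmb n b)
    rw [crossW_apply_high] at h1
    rw [crossW_apply_other a b' v' u' (highEmb n b)
      (by simp only [highEmb]; have := a.isLt; omega)
      (by simp only [highEmb]; simp only [Fin.ext_iff] at hne ⊢; omega)] at h1
    exact (Fin.succ_ne_zero u) h1
  subst hb
  have hu : u = u' := by
    have h1 := congrFun h (highEmb n b)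
    rw [crossW_apply_high, crossW_apply_high] at h1
    exact Fin.succ_injective _ h1
  exact ⟨rfl, rfl, hv, hu⟩

lemma three_le_hammingDist_of {N q : ℕ} (f f' : Fin N → Fin q) (i j k : Fin N)
    (hij : i ≠ j) (hik : i ≠ k) (hjk : j ≠ k)
    (hi : f i ≠ f' i) (hj : f j ≠ f' j) (hk : f k ≠ f' k) :
    3 ≤ hammingDist f f' := by
  have hsub : ({i, j, k} : Finset (Fin N)) ⊆ Finset.univ.filter (fun t => f t ≠ f' t) := by
    intro t ht
    simp only [mem_insert, mem_singleton] at ht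
    rcases ht with rfl | rfl | rfl <;> simp [hi, hj, hk]
  have hcard : ({i, j, k} : Finset (Fin N)).card = 3 := by
    rw [card_insert_of_notMem (by simp [hij, hik]),
      card_insert_of_notMem (by simp [hjk]), card_singleton]
  calc 3 = ({i, j, k} : Finset (Fin N)).card := hcard.symm
    _ ≤ _ := card_le_card hsub

lemma lowEmb_val (a : Fin n) : (lowEmb n a : ℕ) = a := rfl
lemma highEmb_val (b : Fin n) : (highEmb n b : ℕ) = n + b := rfl

lemma lowEmb_ne_highEmb (a b : Fin n) : lowEmb n a ≠ highEmb n b := by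
  intro h
  have : (lowEmb n a : ℕ) = (highEmb n b : ℕ) := congrArg Fin.val h
  rw [lowEmb_val, highEmb_val] at this
  have := a.isLt; omega

lemma three_le_hammingDist_crossW (a a' b b' : Fin n) (v v' u u' : Fin g)
    (hne : ¬(a = a' ∧ v = v'))
    (h1 : v = v' ↔ u = u')
    (h2 : a = a' → (b = b' ↔ v = v'))
    (h3 : v = v' → b = b' → a = a') :
    3 ≤ hammingDist (crossW n g a b v u) (crossW n g a' b' v' u') := by
  have haval := a.isLt
  have haval' := a'.isLt
  by_cases ha : a = a'
  · subst ha
    have hv : v ≠ v' := fun hv => hne ⟨rfl, hv⟩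
    have hb : b ≠ b' := fun hb => hv ((h2 rfl).mp hb)
    have hu : u ≠ u' := fun hu => hv (h1.mpr hu)
    have hbval : (b:ℕ) ≠ (b':ℕ) := fun hh => hb (Fin.ext hh)
    refine three_le_hammingDist_of _ _ (lowEmb n a) (highEmb n b) (highEmb n b')
      (lowEmb_ne_highEmb _ _) (lowEmb_ne_highEmb _ _)
      (fun h => hb (highEmb_inj h)) ?_ ?_ ?_
    · rw [crossW_apply_low, crossW_apply_low]
      exact fun h => hv (Fin.succ_injective _ h)
    · rw [crossW_apply_high, crossW_apply_other a b' v' u' _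
        (by rw [highEmb_val]; omega) (by rw [highEmb_val]; omega)]
      exact Fin.succ_ne_zero u
    · rw [crossW_apply_high, crossW_apply_other a b v u _
        (by rw [highEmb_val]; omega) (by rw [highEmb_val]; omega)]
      exact fun h => (Fin.succ_ne_zero u') h.symm
  · have haval2 : (a:ℕ) ≠ (a':ℕ) := fun hh => ha (Fin.ext hh)
    by_cases hb : b = b'
    · have hv : v ≠ v' := fun hv => ha (h3 hv hb)
      have hu : u ≠ u' := fun hu => hv (h1.mpr hu)
      subst hb
      refine three_le_hammingDist_of _ _ (lowEmb n a) (lowEmb n a') (highEmb n b)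
        (fun h => ha (lowEmb_inj h)) (lowEmb_ne_highEmb _ _) (lowEmb_ne_highEmb _ _)
        ?_ ?_ ?_
      · rw [crossW_apply_low, crossW_apply_other a' b v' u' _
          (by rw [lowEmb_val]; omega) (by rw [lowEmb_val]; omega)]
        exact Fin.succ_ne_zero v
      · rw [crossW_apply_low, crossW_apply_other a b v u _
          (by rw [lowEmb_val]; omega) (by rw [lowEmb_val]; omega)]
        exact fun h => (Fin.succ_ne_zero v') h.symm
      · rw [crossW_apply_high, crossW_apply_high]
        exact fun h => hu (Fin.succ_injective _ h)
    · have hbval : (b:ℕ) ≠ (b':ℕ) := fun hh => hb (Fin.ext hh)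
      refine three_le_hammingDist_of _ _ (lowEmb n a) (highEmb n b) (highEmb n b')
        (lowEmb_ne_highEmb _ _) (lowEmb_ne_highEmb _ _)
        (fun h => hb (highEmb_inj h)) ?_ ?_ ?_
      · rw [crossW_apply_low, crossW_apply_other a' b' v' u' _
          (by rw [lowEmb_val]; omega) (by rw [lowEmb_val]; omega)]
        exact Fin.succ_ne_zero v
      · rw [crossW_apply_high, crossW_apply_other a' b' v' u' _
          (by rw [highEmb_val]; omega) (by rw [highEmb_val]; omega)]
        exact Fin.succ_ne_zero u
      · rw [crossW_apply_high, crossW_apply_other a b v u _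
          (by rw [highEmb_val]; omega) (by rw [highEmb_val]; omega)]
        exact fun h => (Fin.succ_ne_zero u') h.symm

lemma extL_injective : Function.Injective (extL n g) := by
  intro x y h
  funext j
  have := congrFun h (lowEmb n j)
  rwa [extL_apply_low, extL_apply_low] at this

lemma extR_injective : Function.Injective (extR n g) := by
  intro x y h
  funext j
  have := congrFun h (highEmb n j)
  rwa [extR_apply_high, extR_apply_high] at this

lemma supp_nonempty {x : Fin n → Fin (g+1)} (hx : wordWeight x = 2) :
    ∃ j : Fin n, x j ≠ 0 := by
  have : (Finset.univ.filter (fun i => (x i : ℕ) ≠ 0)).Nonempty := by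
    rw [← Finset.card_pos, ← wordWeight]; omega
  obtain ⟨j, hj⟩ := this
  simp only [mem_filter] at hj
  exact ⟨j, fun h => hj.2 (by rw [h]; rfl)⟩

lemma extL_ne_extR {x y : Fin n → Fin (g+1)} (hx : wordWeight x = 2) :
    extL n g x ≠ extR n g y := by
  obtain ⟨j, hj⟩ := supp_nonempty hx
  intro h
  have := congrFun h (lowEmb n j)
  rw [extL_apply_low, extR_apply_of_lt _ _ (by rw [lowEmb_val]; exact j.isLt)] at this
  exact hj this

lemma supp_two {x : Fin n → Fin (g+1)} (hx : wordWeight x = 2) :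
    ∃ j k : Fin n, j ≠ k ∧ x j ≠ 0 ∧ x k ≠ 0 := by
  obtain ⟨j, k, hjk, hs⟩ := Finset.card_eq_two.mp hx
  have hj : j ∈ Finset.univ.filter (fun i => (x i : ℕ) ≠ 0) := by rw [hs]; simp
  have hk : k ∈ Finset.univ.filter (fun i => (x i : ℕ) ≠ 0) := by rw [hs]; simp
  simp only [mem_filter] at hj hk
  exact ⟨j, k, hjk, fun h => hj.2 (by rw [h]; rfl), fun h => hk.2 (by rw [h]; rfl)⟩

lemma three_le_hammingDist_extL_extR {x y : Fin n → Fin (g+1)}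
    (hx : wordWeight x = 2) (hy : wordWeight y = 2) :
    3 ≤ hammingDist (extL n g x) (extR n g y) := by
  obtain ⟨j, k, hjk, hxj, hxk⟩ := supp_two hx
  obtain ⟨l, hl⟩ := supp_nonempty hy
  refine three_le_hammingDist_of _ _ (lowEmb n j) (lowEmb n k) (highEmb n l)
    (fun h => hjk (lowEmb_inj h)) (lowEmb_ne_highEmb _ _) (lowEmb_ne_highEmb _ _)
    ?_ ?_ ?_
  · rw [extL_apply_low, extR_apply_of_lt _ _ (by rw [lowEmb_val]; exact j.isLt)]
    exact hxj
  · rw [extL_apply_low, extR_apply_of_lt _ _ (by rw [lowEmb_val]; exact k.isLt)]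
    exact hxk
  · rw [extR_apply_high, extL_apply_of_ge _ _ (by rw [highEmb_val]; omega)]
    exact fun h => hl h.symm

/-- A one-factor of the doubled configuration coming from a one-factor `S`
of the original: copy it on both halves. -/
def halfFac (n g : ℕ) (S : Finset (Fin n → Fin (g+1))) :
    Finset (Fin (2*n) → Fin (g+1)) :=
  S.image (extL n g) ∪ S.image (extR n g)

/-- A "cross" one-factor: for parameters `(c, w)` it consists of the words
joining position `a` (value `v+1`) to position `n + (a + c + v)` (value `v+w+1`). -/
def crossFac (n g : ℕ) (hng : g ≤ n) (c : Fin n) (w : Fin g) :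
    Finset (Fin (2*n) → Fin (g+1)) :=
  Finset.univ.image (fun p : Fin n × Fin g =>
    crossW n g p.1 (p.1 + c + Fin.castLE hng p.2) p.2 (p.2 + w))

lemma card_halfFac (S : Finset (Fin n → Fin (g+1)))
    (hS : ∀ x ∈ S, wordWeight x = 2) :
    (halfFac n g S).card = S.card + S.card := by
  unfold halfFac
  rw [card_union_of_disjoint, card_image_of_injective _ extL_injective,
    card_image_of_injective _ extR_injective]
  rw [Finset.disjoint_left]
  rintro z hz hz'
  simp only [mem_image] at hz hz'
  obtain ⟨x, hx, rfl⟩ := hz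
  obtain ⟨y, hy, hyz⟩ := hz'
  exact extL_ne_extR (hS x hx) hyz.symm

lemma card_crossFac (hng : g ≤ n) (c : Fin n) (w : Fin g) :
    (crossFac n g hng c w).card = n * g := by
  unfold crossFac
  rw [card_image_of_injective, card_univ, Fintype.card_prod, Fintype.card_fin,
    Fintype.card_fin]
  intro p p' hpp
  obtain ⟨h1, _, h3, _⟩ := crossW_inj _ _ _ _ _ _ _ _ hpp
  exact Prod.ext h1 h3

lemma mem_crossFac_iff (hng : g ≤ n) (c : Fin n) (w : Fin g)
    (a b : Fin n) (v u : Fin g) :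
    crossW n g a b v u ∈ crossFac n g hng c w ↔
      b = a + c + Fin.castLE hng v ∧ u = v + w := by
  unfold crossFac
  simp only [mem_image, mem_univ, true_and]
  constructor
  · rintro ⟨p, hp⟩
    obtain ⟨h1, h2, h3, h4⟩ := crossW_inj _ _ _ _ _ _ _ _ hp.symm
    subst h1; subst h3
    exact ⟨h2, h4⟩
  · rintro ⟨rfl, rfl⟩
    exact ⟨(a, v), rfl⟩

lemma crossW_not_mem_halfFac (a b : Fin n) (v u : Fin g)
    (S : Finset (Fin n → Fin (g+1))) :
    crossW n g a b v u ∉ halfFac n g S := by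
  unfold halfFac
  simp only [mem_union, mem_image]
  rintro (⟨x, _, hx⟩ | ⟨x, _, hx⟩)
  · have := congrFun hx (highEmb n b)
    rw [extL_apply_of_ge _ _ (by rw [highEmb_val]; omega), crossW_apply_high] at this
    exact Fin.succ_ne_zero u this.symm
  · have := congrFun hx (lowEmb n a)
    rw [extR_apply_of_lt _ _ (by rw [lowEmb_val]; exact a.isLt), crossW_apply_low] at this
    exact Fin.succ_ne_zero v this.symm

lemma disjoint_halfFac {S T : Finset (Fin n → Fin (g+1))}
    (hS : ∀ x ∈ S, wordWeight x = 2) (hT : ∀ x ∈ T, wordWeight x = 2)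
    (hST : Disjoint S T) : Disjoint (halfFac n g S) (halfFac n g T) := by
  rw [Finset.disjoint_left]
  intro z hz hz'
  unfold halfFac at hz hz'
  simp only [mem_union, mem_image] at hz hz'
  have hST' := Finset.disjoint_left.mp hST
  rcases hz with ⟨x, hx, rfl⟩ | ⟨x, hx, rfl⟩ <;>
    rcases hz' with ⟨y, hy, hyz⟩ | ⟨y, hy, hyz⟩
  · exact hST' hx (extL_injective hyz.symm ▸ hy)
  · exact (extL_ne_extR (hS x hx) hyz.symm).elim
  · exact (extL_ne_extR (hT y hy) hyz).elim
  · exact hST' hx (extR_injective hyz.symm ▸ hy)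

lemma three_le_dist_in_crossFac [NeZero n] [NeZero g] (hng : g ≤ n)
    (c : Fin n) (w : Fin g) (a a' : Fin n) (v v' : Fin g)
    (hne : ¬(a = a' ∧ v = v')) :
    3 ≤ hammingDist (crossW n g a (a + c + Fin.castLE hng v) v (v + w))
      (crossW n g a' (a' + c + Fin.castLE hng v') v' (v' + w)) := by
  apply three_le_hammingDist_crossW _ _ _ _ _ _ _ _ hne
  · constructor
    · rintro rfl; rfl
    · intro h; exact add_right_cancel h
  · rintro rfl
    constructor
    · intro h
      exact Fin.castLE_injective hng (add_left_cancel h)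
    · rintro rfl; rfl
  · rintro rfl h
    exact add_right_cancel (add_right_cancel h)

lemma disjoint_crossFac [NeZero n] [NeZero g] (hng : g ≤ n)
    {c c' : Fin n} {w w' : Fin g} (hne : (c, w) ≠ (c', w')) :
    Disjoint (crossFac n g hng c w) (crossFac n g hng c' w') := by
  rw [Finset.disjoint_left]
  intro z hz hz'
  unfold crossFac at hz hz'
  simp only [mem_image, mem_univ, true_and] at hz hz'
  obtain ⟨p, hp⟩ := hz
  obtain ⟨p', hp'⟩ := hz'
  rw [← hp'] at hp
  obtain ⟨h1, h2, h3, h4⟩ := crossW_inj _ _ _ _ _ _ _ _ hp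
  rw [h1, h3] at h2
  rw [h3] at h4
  apply hne
  have hc : c = c' := add_left_cancel (add_right_cancel h2)
  have hw : w = w' := add_left_cancel h4
  rw [hc, hw]

lemma cover (z : Fin (2*n) → Fin (g+1)) (hz : wordWeight z = 2) :
    (∃ x, wordWeight x = 2 ∧ z = extL n g x) ∨
    (∃ x, wordWeight x = 2 ∧ z = extR n g x) ∨
    (∃ (a b : Fin n) (v u : Fin g), z = crossW n g a b v u) := by
  obtain ⟨i, j, hij, hs⟩ := Finset.card_eq_two.mp hz
  have hmem : ∀ t, z t ≠ 0 ↔ (t = i ∨ t = j) := by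
    intro t
    have : t ∈ Finset.univ.filter (fun s => (z s : ℕ) ≠ 0) ↔ t ∈ ({i, j} : Finset _) := by
      rw [hs]
    simp only [mem_filter, mem_univ, true_and, mem_insert, mem_singleton] at this
    rw [← this]
    constructor
    · intro h hh; exact h (Fin.ext hh)
    · intro h hh; exact h (by rw [hh]; rfl)
  have hzero : ∀ t : Fin (2*n), (t:ℕ) ≠ (i:ℕ) → (t:ℕ) ≠ (j:ℕ) → z t = 0 := by
    intro t h1 h2
    by_contra h
    rcases (hmem t).mp h with rfl | rfl
    · exact h1 rfl
    · exact h2 rfl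
  have mixed : ∀ i' j' : Fin (2*n), i' ≠ j' →
      (∀ t : Fin (2*n), (t:ℕ) ≠ (i':ℕ) → (t:ℕ) ≠ (j':ℕ) → z t = 0) →
      z i' ≠ 0 → z j' ≠ 0 →
      (i':ℕ) < n → n ≤ (j':ℕ) →
      ∃ (a b : Fin n) (v u : Fin g), z = crossW n g a b v u := by
    intro i' j' hij' hzero' hi0 hj0 hi hj
    have hjlt := j'.isLt
    have hziv : (z i' : ℕ) ≠ 0 := fun h => hi0 (Fin.ext h)
    have hzjv : (z j' : ℕ) ≠ 0 := fun h => hj0 (Fin.ext h)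
    have hzi := (z i').isLt
    have hzj := (z j').isLt
    refine ⟨⟨(i':ℕ), hi⟩, ⟨(j':ℕ) - n, by omega⟩,
      ⟨(z i' : ℕ) - 1, by omega⟩, ⟨(z j' : ℕ) - 1, by omega⟩, ?_⟩
    funext t
    unfold crossW
    by_cases h1 : (t:ℕ) = (i':ℕ)
    · rw [if_pos h1]
      have : t = i' := Fin.ext h1
      subst this
      apply Fin.ext
      simp [Fin.val_succ]
      omega
    · rw [if_neg h1]
      by_cases h2 : (t:ℕ) = n + ((j':ℕ) - n)
      · rw [if_pos h2]
        have : t = j' := Fin.ext (by omega)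
        subst this
        apply Fin.ext
        simp [Fin.val_succ]
        omega
      · rw [if_neg h2]
        exact hzero' t h1 (by omega)
  have hi0 : z i ≠ 0 := (hmem i).mpr (Or.inl rfl)
  have hj0 : z j ≠ 0 := (hmem j).mpr (Or.inr rfl)
  by_cases hi : (i:ℕ) < n <;> by_cases hj : (j:ℕ) < n
  · -- both low
    left
    have hzeq : z = extL n g (fun k => z (lowEmb n k)) := by
      funext t
      unfold extL
      by_cases h : (t:ℕ) < n
      · rw [dif_pos h]
        exact congrArg z (Fin.ext rfl)
      · rw [dif_neg h]
        exact hzero t (by omega) (by omega)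
    refine ⟨_, ?_, hzeq⟩
    have := wordWeight_extL (n := n) (g := g) (fun k => z (lowEmb n k))
    rw [← hzeq] at this
    omega
  · -- i low, j high
    exact Or.inr (Or.inr (mixed i j hij hzero hi0 hj0 hi (by omega)))
  · -- j low, i high
    refine Or.inr (Or.inr (mixed j i hij.symm ?_ hj0 hi0 hj (by omega)))
    intro t h1 h2
    exact hzero t h2 h1
  · -- both high
    right; left
    have hzeq : z = extR n g (fun k => z (highEmb n k)) := by
      funext t
      unfold extR
      by_cases h : (t:ℕ) < n
      · rw [dif_pos h]
        exact hzero t (by omega) (by omega)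
      · rw [dif_neg h]
        have ht := t.isLt
        refine congrArg z (Fin.ext ?_)
        simp only [highEmb]
        omega
    refine ⟨_, ?_, hzeq⟩
    have := wordWeight_extR (n := n) (g := g) (fun k => z (highEmb n k))
    rw [← hzeq] at this
    omega


end AuxOFDoubling

open Finset in
/-- Doubling construction: if `n·g` is even, `n > g ≥ 1` and an `OF(n,g)`
exists, then an `OF(2n,g)` exists. -/
theorem OF_doubling (n g : ℕ) (hg : 1 ≤ g) (hn : 1 ≤ n) (heven : Even (n * g))
    (hng : g < n) (h : IsOF n g) : IsOF (2 * n) g := by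
  haveI : NeZero n := ⟨by omega⟩
  haveI : NeZero g := ⟨by omega⟩
  obtain ⟨P, hdisj, hcov, hcard, hdist⟩ := h
  have hng' : g ≤ n := hng.le
  have hkey : g * (2*n - 1) = g * (n-1) + n * g := by
    have h2 : 2*n - 1 = (n-1) + n := by omega
    rw [h2, Nat.mul_add, Nat.mul_comm g n]
  obtain ⟨t, ht⟩ := heven
  have hPmem : ∀ i, ∀ x ∈ P i, wordWeight x = 2 := by
    intro i x hx
    have : x ∈ weightTwoWords n g := by
      rw [← hcov]; exact mem_biUnion.mpr ⟨i, mem_univ _, hx⟩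
    simpa [weightTwoWords, mem_filter] using this
  refine ⟨fun i => if h' : (i:ℕ) < g*(n-1) then halfFac n g (P ⟨(i:ℕ), h'⟩)
    else (fun p : Fin n × Fin g => crossFac n g hng' p.1 p.2)
      (finProdFinEquiv.symm ⟨(i:ℕ) - g*(n-1), by have := i.isLt; omega⟩),
    ?_, ?_, ?_, ?_⟩
  · -- pairwise disjoint
    intro i j hij
    dsimp only
    by_cases hi : (i:ℕ) < g*(n-1) <;> by_cases hj : (j:ℕ) < g*(n-1)
    · rw [dif_pos hi, dif_pos hj]
      exact disjoint_halfFac (hPmem _) (hPmem _)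
        (hdisj _ _ (fun hh : (⟨(i:ℕ), hi⟩ : Fin (g*(n-1))) = ⟨(j:ℕ), hj⟩ =>
          hij (Fin.ext (Fin.mk.inj hh))))
    · rw [dif_pos hi, dif_neg hj]
      rw [Finset.disjoint_right]
      intro z hz
      unfold crossFac at hz
      simp only [mem_image, mem_univ, true_and] at hz
      obtain ⟨p, rfl⟩ := hz
      exact crossW_not_mem_halfFac _ _ _ _ _
    · rw [dif_neg hi, dif_pos hj]
      rw [Finset.disjoint_left]
      intro z hz
      unfold crossFac at hz
      simp only [mem_image, mem_univ, true_and] at hz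
      obtain ⟨p, rfl⟩ := hz
      exact crossW_not_mem_halfFac _ _ _ _ _
    · rw [dif_neg hi, dif_neg hj]
      apply disjoint_crossFac
      intro hh
      apply hij
      have h1 : finProdFinEquiv.symm (⟨(i:ℕ) - g*(n-1), by have := i.isLt; omega⟩ : Fin (n*g))
          = finProdFinEquiv.symm ⟨(j:ℕ) - g*(n-1), by have := j.isLt; omega⟩ := by
        apply Prod.ext
        · exact congrArg Prod.fst hh
        · exact congrArg Prod.snd hh
      have h2 := finProdFinEquiv.symm.injective h1
      have h3 := congrArg Fin.val h2
      simp only at h3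
      exact Fin.ext (by omega)
  · -- union
    apply Finset.Subset.antisymm
    · intro z hz
      rw [mem_biUnion] at hz
      obtain ⟨i, _, hz⟩ := hz
      dsimp only at hz
      have hw2 : wordWeight z = 2 := by
        by_cases hi : (i:ℕ) < g*(n-1)
        · rw [dif_pos hi] at hz
          unfold halfFac at hz
          simp only [mem_union, mem_image] at hz
          rcases hz with ⟨x, hx, rfl⟩ | ⟨x, hx, rfl⟩
          · rw [wordWeight_extL]; exact hPmem _ _ hx
          · rw [wordWeight_extR]; exact hPmem _ _ hx
        · rw [dif_neg hi] at hz
          unfold crossFac at hz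
          simp only [mem_image, mem_univ, true_and] at hz
          obtain ⟨p, rfl⟩ := hz
          exact wordWeight_crossW _ _ _ _
      simp [weightTwoWords, mem_filter, hw2]
    · intro z hz
      have hw2 : wordWeight z = 2 := by
        simpa [weightTwoWords, mem_filter] using hz
      rw [mem_biUnion]
      rcases cover z hw2 with ⟨x, hx2, rfl⟩ | ⟨x, hx2, rfl⟩ | ⟨a, b, v, u, rfl⟩
      · have hxmem : x ∈ weightTwoWords n g := by simp [weightTwoWords, mem_filter, hx2]
        rw [← hcov, mem_biUnion] at hxmem
        obtain ⟨s, _, hs⟩ := hxmem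
        have hslt : (s:ℕ) < g*(2*n-1) := by have := s.isLt; omega
        refine ⟨⟨(s:ℕ), hslt⟩, mem_univ _, ?_⟩
        dsimp only
        rw [dif_pos (show ((⟨(s:ℕ), hslt⟩ : Fin (g*(2*n-1))):ℕ) < g*(n-1) from s.isLt)]
        have he : (⟨(s:ℕ), s.isLt⟩ : Fin (g*(n-1))) = s := Fin.ext rfl
        rw [he]
        exact mem_union_left _ (mem_image_of_mem _ hs)
      · have hxmem : x ∈ weightTwoWords n g := by simp [weightTwoWords, mem_filter, hx2]
        rw [← hcov, mem_biUnion] at hxmem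
        obtain ⟨s, _, hs⟩ := hxmem
        have hslt : (s:ℕ) < g*(2*n-1) := by have := s.isLt; omega
        refine ⟨⟨(s:ℕ), hslt⟩, mem_univ _, ?_⟩
        dsimp only
        rw [dif_pos (show ((⟨(s:ℕ), hslt⟩ : Fin (g*(2*n-1))):ℕ) < g*(n-1) from s.isLt)]
        have he : (⟨(s:ℕ), s.isLt⟩ : Fin (g*(n-1))) = s := Fin.ext rfl
        rw [he]
        exact mem_union_right _ (mem_image_of_mem _ hs)
      · set c : Fin n := b - a - Fin.castLE hng' v with hc
        set w : Fin g := u - v with hw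
        have hval := (finProdFinEquiv (c, w)).isLt
        have hilt : g*(n-1) + (finProdFinEquiv (c, w) : ℕ) < g*(2*n-1) := by omega
        refine ⟨⟨g*(n-1) + (finProdFinEquiv (c, w) : ℕ), hilt⟩, mem_univ _, ?_⟩
        dsimp only
        rw [dif_neg (by simp)]
        have hdec : (⟨(g*(n-1) + (finProdFinEquiv (c, w) : ℕ)) - g*(n-1), by omega⟩ :
            Fin (n*g)) = finProdFinEquiv (c, w) := Fin.ext (by simp)
        rw [hdec, Equiv.symm_apply_apply]
        rw [mem_crossFac_iff]
        constructor
        · rw [hc, add_assoc, sub_add_cancel, add_sub_cancel]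
        · rw [hw, add_sub_cancel]
  · -- cardinalities
    intro i
    dsimp only
    have hgn : g * n = t + t := by rw [Nat.mul_comm]; exact ht
    have h2n : g * (2*n) = 2*(t+t) := by rw [← hgn]; ring
    by_cases hi : (i:ℕ) < g*(n-1)
    · rw [dif_pos hi, card_halfFac _ (hPmem _), hcard]
      omega
    · rw [dif_neg hi, card_crossFac]
      omega
  · -- distances
    intro i x hx y hy hxy
    dsimp only at hx hy
    by_cases hi : (i:ℕ) < g*(n-1)
    · rw [dif_pos hi] at hx hy
      unfold halfFac at hx hy
      simp only [mem_union, mem_image] at hx hy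
      rcases hx with ⟨x', hx', rfl⟩ | ⟨x', hx', rfl⟩ <;>
        rcases hy with ⟨y', hy', rfl⟩ | ⟨y', hy', rfl⟩
      · rw [hammingDist_extL]
        exact hdist _ _ hx' _ hy' (fun hh => hxy (by rw [hh]))
      · exact three_le_hammingDist_extL_extR (hPmem _ _ hx') (hPmem _ _ hy')
      · rw [hammingDist_comm]
        exact three_le_hammingDist_extL_extR (hPmem _ _ hy') (hPmem _ _ hx')
      · rw [hammingDist_extR]
        exact hdist _ _ hx' _ hy' (fun hh => hxy (by rw [hh]))
    · rw [dif_neg hi] at hx hy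
      unfold crossFac at hx hy
      simp only [mem_image, mem_univ, true_and] at hx hy
      obtain ⟨p, rfl⟩ := hx
      obtain ⟨q, rfl⟩ := hy
      apply three_le_dist_in_crossFac
      rintro ⟨h1, h2⟩
      exact hxy (by rw [Prod.ext h1 h2])
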